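/- There is a universal constant C > 0 such that for every pure strategy S for G_Rad^{(n)} and every ε ∈ {−1,1}^{n×n}: ( Σ_{i,j=1}^n ‖∂_{ij} Φ^i_S(ε)‖_op² )^{1/2} ≤ ( Σ_{i,j=1}^n (1/4)·‖ Ṽ_ε ⊗ W̃_ε − Ṽ_{ε̄^{ij}} ⊗ W̃_{ε̄^{ij}} ‖_op² )^{1/2} + C/n, where ε̄^{ij} denotes ε with its (i,j) entry flipped and Ṽ_ε ⊗ W̃_ε is viewed as a linear map from ℂ^{k̃} ⊗ ℂ^{k̃} to (ℂ^n ⊗ ℂ^r) ⊗ (ℂ^n ⊗ ℂ^r). -/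

import Mathlib

open scoped BigOperators

noncomputable section

abbrev ES (ι : Type) := EuclideanSpace ℂ ι

def sgn (b : Bool) : ℂ := if b then 1 else -1

def sgnR (b : Bool) : ℝ := if b then 1 else -1

/-- Uniform average of a real-valued function over a finite type. -/
def Eavg {α : Type} [Fintype α] (f : α → ℝ) : ℝ := (∑ x, f x) / (Fintype.card α : ℝ)

/-- Uniform average of a vector-valued function over a finite type. -/
def EavgV {α : Type} [Fintype α] {X : Type} [AddCommGroup X] [Module ℂ X] (f : α → X) : X :=
  (Fintype.card α : ℂ)⁻¹ • ∑ x, f x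

/-- The matrix of a continuous linear map between Euclidean spaces. -/
def matOf {ι κ : Type} [Fintype ι] [Fintype κ] [DecidableEq ι] (f : ES ι →L[ℂ] ES κ) :
    Matrix κ ι ℂ := Matrix.toEuclideanLin.symm (f : ES ι →ₗ[ℂ] ES κ)

/-- The continuous linear map between Euclidean spaces given by a matrix. -/
def ofMat {ι κ : Type} [Fintype ι] [Fintype κ] [DecidableEq ι] (M : Matrix κ ι ℂ) :
    ES ι →L[ℂ] ES κ := LinearMap.toContinuousLinearMap (Matrix.toEuclideanLin M)

/-- Tensor product of two (continuous) linear maps between Euclidean spaces, realized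
via the Kronecker product of their matrices. -/
def tensorCLM {ι₁ ι₂ κ₁ κ₂ : Type} [Fintype ι₁] [Fintype ι₂] [Fintype κ₁] [Fintype κ₂]
    [DecidableEq ι₁] [DecidableEq ι₂]
    (f : ES ι₁ →L[ℂ] ES κ₁) (g : ES ι₂ →L[ℂ] ES κ₂) :
    ES (ι₁ × ι₂) →L[ℂ] ES (κ₁ × κ₂) :=
  ofMat (Matrix.kroneckerMap (· * ·) (matOf f) (matOf g))

/-- The isometry `ℂ^k → ℂ^n ⊗ ℂ^n ⊗ ℂ^k`, `x ↦ e_i ⊗ e_j ⊗ x`. -/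
def embedAB {n k : ℕ} (i j : Fin n) : ES (Fin k) →L[ℂ] ES (Fin n × Fin n × Fin k) :=
  ofMat (Matrix.of fun p c => if p.1 = i ∧ p.2.1 = j ∧ p.2.2 = c then 1 else 0)

/-- `V|ij⟩ : ℂ^k → ℂ^{k̃}`, the map `x ↦ V(e_i ⊗ e_j ⊗ x)`. -/
def Vij {n k k' : ℕ} (V : ES (Fin n × Fin n × Fin k) →L[ℂ] ES (Fin k')) (i j : Fin n) :
    ES (Fin k) →L[ℂ] ES (Fin k') := V.comp (embedAB i j)

/-- `e_i^* ⊗ Id : ℂ^n ⊗ ℂ^r → ℂ^r`. -/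
def proj {n r : ℕ} (i : Fin n) : ES (Fin n × Fin r) →L[ℂ] ES (Fin r) :=
  ofMat (Matrix.of fun s p => if p.1 = i ∧ p.2 = s then 1 else 0)

/-- A pure strategy for the game `G_Rad^{(n)}` with dimensions `k, k', r`. -/
structure PureStrategy (n k k' r : ℕ) where
  V : ES (Fin n × Fin n × Fin k) →L[ℂ] ES (Fin k')
  W : ((Fin n × Fin n) → Bool) → ES (Fin k) →L[ℂ] ES (Fin k')
  Vt : ((Fin n × Fin n) → Bool) → ES (Fin k') →L[ℂ] ES (Fin n × Fin r)
  Wt : ((Fin n × Fin n) → Bool) → ES (Fin k') →L[ℂ] ES (Fin n × Fin r)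
  φ : ES (Fin k × Fin k)
  hV : ‖V‖ ≤ 1
  hW : ∀ ε, ‖W ε‖ ≤ 1
  hVt : ∀ ε, ‖Vt ε‖ ≤ 1
  hWt : ∀ ε, ‖Wt ε‖ ≤ 1
  hφ : ‖φ‖ = 1

/-- The value `ω(S)` of a pure strategy in `G_Rad^{(n)}`. -/
def value {n k k' r : ℕ} (S : PureStrategy n k k' r) : ℝ :=
  Eavg fun ε => ‖((n : ℂ) ^ 2)⁻¹ • ∑ ij : Fin n × Fin n, sgn (ε ij) •
    (tensorCLM ((proj ij.1).comp (S.Vt ε)) ((proj ij.2).comp (S.Wt ε)))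
      ((tensorCLM (Vij S.V ij.1 ij.2) (S.W ε)) S.φ)‖ ^ 2

/-- The assignment `Φ^i_S : {−1,1}^{n×n} → B(ℂ^k ⊗ ℂ^{k̃}, ℂ^r ⊗ ℂ^r)`. -/
def PhiI {n k k' r : ℕ} (S : PureStrategy n k k' r) (ε : (Fin n × Fin n) → Bool) :
    ES (Fin k × Fin k') →L[ℂ] ES (Fin r × Fin r) :=
  ((n : ℂ) ^ 2)⁻¹ • ∑ ij : Fin n × Fin n, sgn (ε ij) •
    ((tensorCLM ((proj ij.1).comp (S.Vt ε)) ((proj ij.2).comp (S.Wt ε))).comp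
      (tensorCLM (Vij S.V ij.1 ij.2) (ContinuousLinearMap.id ℂ (ES (Fin k')))))

/-- Flip the `p`-th sign of `ε`. -/
def flipAt {ι : Type} [DecidableEq ι] (ε : ι → Bool) (p : ι) : ι → Bool :=
  Function.update ε p (!(ε p))

/-- The regularity parameter `σ_Φ` of a map on the Boolean hypercube with values in a
normed space; `‖∂_pΦ(ε)‖ = ‖Φ(ε) − Φ(ε̄^p)‖/2`. -/
def sigma {ι : Type} [Fintype ι] [DecidableEq ι] {X : Type} [NormedAddCommGroup X]
    (Φ : (ι → Bool) → X) : ℝ :=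
  Real.log (Fintype.card ι) *
    Eavg fun ε => Real.sqrt (∑ p : ι, (‖Φ ε - Φ (flipAt ε p)‖ / 2) ^ 2)

/-- The type-2 constant with `m` vectors of a normed space. -/
def T2With (m : ℕ) (X : Type) [NormedAddCommGroup X] [NormedSpace ℝ X] : ℝ :=
  sInf {T : ℝ | 0 ≤ T ∧ ∀ x : Fin m → X,
    Real.sqrt (Eavg fun ε : Fin m → Bool => ‖∑ i, sgnR (ε i) • x i‖ ^ 2)
      ≤ T * Real.sqrt (∑ i, ‖x i‖ ^ 2)}

/-- `ĥ : ℂ^n ⊗ ℂ^{k̃} → ℂ^{r'}` determined by `ĥ(e_i ⊗ y) = (e_i^* ⊗ Id)(h y)`. -/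
def hat {n k' r' : ℕ} (h : ES (Fin k') →L[ℂ] ES (Fin n × Fin r')) :
    ES (Fin n × Fin k') →L[ℂ] ES (Fin r') :=
  ofMat (Matrix.of fun s p => matOf h (p.1, s) p.2)

/-- The norm `N` on `(ℂ^n ⊗ ℂ^{k̃}) ⊗ (ℂ^n ⊗ ℂ^{k̃})`. -/
def Nnorm {n k' : ℕ} (t : ES ((Fin n × Fin k') × (Fin n × Fin k'))) : ℝ :=
  sSup {s : ℝ | ∃ (r' : ℕ) (h g : ES (Fin k') →L[ℂ] ES (Fin n × Fin r')),
    ‖h‖ ≤ 1 ∧ ‖g‖ ≤ 1 ∧ s = ‖(tensorCLM (hat h) (hat g)) t‖}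

/-- `v ↦ e_i ⊗ e_j ⊗ v`, reordered into `(ℂ^n ⊗ ℂ^{k̃}) ⊗ (ℂ^n ⊗ ℂ^{k̃})`. -/
def embedPair {n k' : ℕ} (i j : Fin n) :
    ES (Fin k' × Fin k') →L[ℂ] ES ((Fin n × Fin k') × (Fin n × Fin k')) :=
  ofMat (Matrix.of fun p q => if p.1.1 = i ∧ p.2.1 = j ∧ p.1.2 = q.1 ∧ p.2.2 = q.2 then 1 else 0)

/-- The assignment `Φ^{ii}_S : {−1,1}^{n×n} → (ℂ^n ⊗ ℂ^{k̃}) ⊗ (ℂ^n ⊗ ℂ^{k̃})`. -/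
def PhiII {n k k' r : ℕ} (S : PureStrategy n k k' r) (ε : (Fin n × Fin n) → Bool) :
    ES ((Fin n × Fin k') × (Fin n × Fin k')) :=
  ((n : ℂ) ^ 2)⁻¹ • ∑ ij : Fin n × Fin n, sgn (ε ij) •
    embedPair ij.1 ij.2 ((tensorCLM (Vij S.V ij.1 ij.2) (S.W ε)) S.φ)


section Aux

lemma aux_ofMat_apply {ι κ : Type} [Fintype ι] [Fintype κ] [DecidableEq ι] (M : Matrix κ ι ℂ)
    (v : ES ι) (i : κ) : ofMat M v i = ∑ j, M i j * v j := by
  simp [ofMat, Matrix.toEuclideanLin_apply, Matrix.mulVec, dotProduct]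

lemma aux_ofMat_matOf {ι κ : Type} [Fintype ι] [Fintype κ] [DecidableEq ι]
    (f : ES ι →L[ℂ] ES κ) : ofMat (matOf f) = f := by
  ext v
  simp [ofMat, matOf]

lemma aux_matOf_ofMat {ι κ : Type} [Fintype ι] [Fintype κ] [DecidableEq ι] (M : Matrix κ ι ℂ) :
    matOf (ofMat M) = M := by
  simp [ofMat, matOf]

lemma aux_ofMat_mul {ι κ μ : Type} [Fintype ι] [Fintype κ] [Fintype μ] [DecidableEq ι]
    [DecidableEq κ] (M : Matrix μ κ ℂ) (N : Matrix κ ι ℂ) :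
    ofMat (M * N) = (ofMat M).comp (ofMat N) := by
  ext v i
  simp only [ofMat, ContinuousLinearMap.comp_apply, LinearMap.coe_toContinuousLinearMap',
    Matrix.toEuclideanLin_apply]
  simp [Matrix.mulVec_mulVec]

lemma aux_norm_sq_eq {ι : Type} [Fintype ι] (v : ES ι) : ‖v‖ ^ 2 = ∑ i, ‖v i‖ ^ 2 := by
  rw [EuclideanSpace.norm_eq, Real.sq_sqrt (by positivity)]

lemma aux_mulvec_sq_le {ι κ : Type} [Fintype ι] [Fintype κ] [DecidableEq ι] (M : Matrix κ ι ℂ)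
    (f : ι → ℂ) : ∑ i, ‖∑ j, M i j * f j‖ ^ 2 ≤ ‖ofMat M‖ ^ 2 * ∑ j, ‖f j‖ ^ 2 := by
  set v : ES ι := (WithLp.equiv 2 (ι → ℂ)).symm f with hv
  have h1 : ∑ i, ‖∑ j, M i j * f j‖ ^ 2 = ‖ofMat M v‖ ^ 2 := by
    rw [aux_norm_sq_eq]
    exact Finset.sum_congr rfl fun i _ => by rw [aux_ofMat_apply]; rfl
  have h2 : ∑ j, ‖f j‖ ^ 2 = ‖v‖ ^ 2 := by rw [aux_norm_sq_eq]; rfl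
  rw [h1, h2, ← mul_pow]
  exact pow_le_pow_left₀ (norm_nonneg _) ((ofMat M).le_opNorm v) 2

lemma aux_norm_tensorCLM_le {ι₁ ι₂ κ₁ κ₂ : Type} [Fintype ι₁] [Fintype ι₂] [Fintype κ₁]
    [Fintype κ₂] [DecidableEq ι₁] [DecidableEq ι₂]
    (f : ES ι₁ →L[ℂ] ES κ₁) (g : ES ι₂ →L[ℂ] ES κ₂) :
    ‖tensorCLM f g‖ ≤ ‖f‖ * ‖g‖ := by
  apply ContinuousLinearMap.opNorm_le_bound _ (by positivity)
  intro x
  have key : ‖tensorCLM f g x‖ ^ 2 ≤ (‖f‖ * ‖g‖ * ‖x‖) ^ 2 := by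
    set A := matOf f with hA
    set B := matOf g with hB
    have hAn : ‖ofMat A‖ = ‖f‖ := by rw [hA, aux_ofMat_matOf]
    have hBn : ‖ofMat B‖ = ‖g‖ := by rw [hB, aux_ofMat_matOf]
    have expand : ‖tensorCLM f g x‖ ^ 2
        = ∑ a : κ₁, ∑ b : κ₂, ‖∑ d : ι₂, B b d * (∑ c : ι₁, A a c * x (c, d))‖ ^ 2 := by
      rw [aux_norm_sq_eq, Fintype.sum_prod_type]
      refine Finset.sum_congr rfl fun a _ => Finset.sum_congr rfl fun b _ => ?_
      have h0 : (tensorCLM f g x) (a, b) = ∑ p : ι₁ × ι₂, (A a p.1 * B b p.2) * x p :=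
        aux_ofMat_apply _ _ _
      rw [h0, Fintype.sum_prod_type, Finset.sum_comm]
      refine congrArg (fun t : ℂ => ‖t‖ ^ 2) (Finset.sum_congr rfl fun d _ => ?_)
      rw [Finset.mul_sum]
      exact Finset.sum_congr rfl fun c _ => by ring
    rw [expand]
    calc ∑ a : κ₁, ∑ b : κ₂, ‖∑ d : ι₂, B b d * (∑ c : ι₁, A a c * x (c, d))‖ ^ 2
        ≤ ∑ a : κ₁, ‖g‖ ^ 2 * ∑ d : ι₂, ‖∑ c : ι₁, A a c * x (c, d)‖ ^ 2 := by
          apply Finset.sum_le_sum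
          intro a _
          have := aux_mulvec_sq_le B (fun d => ∑ c : ι₁, A a c * x (c, d))
          rwa [hBn] at this
      _ = ‖g‖ ^ 2 * ∑ d : ι₂, ∑ a : κ₁, ‖∑ c : ι₁, A a c * x (c, d)‖ ^ 2 := by
          rw [← Finset.mul_sum, Finset.sum_comm]
      _ ≤ ‖g‖ ^ 2 * ∑ d : ι₂, ‖f‖ ^ 2 * ∑ c : ι₁, ‖x (c, d)‖ ^ 2 := by
          apply mul_le_mul_of_nonneg_left _ (by positivity)
          apply Finset.sum_le_sum
          intro d _
          have := aux_mulvec_sq_le A (fun c => x (c, d))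
          rwa [hAn] at this
      _ = (‖f‖ * ‖g‖ * ‖x‖) ^ 2 := by
          have hx : ∑ d : ι₂, ∑ c : ι₁, ‖x (c, d)‖ ^ 2 = ‖x‖ ^ 2 := by
            rw [aux_norm_sq_eq, Fintype.sum_prod_type]
            exact Finset.sum_comm
          rw [← Finset.mul_sum, hx]
          ring
  have := Real.sqrt_le_sqrt key
  rwa [Real.sqrt_sq (norm_nonneg _), Real.sqrt_sq (by positivity)] at this

lemma aux_tensorCLM_comp {ι₁ ι₂ κ₁ κ₂ μ₁ μ₂ : Type} [Fintype ι₁] [Fintype ι₂] [Fintype κ₁]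
    [Fintype κ₂] [Fintype μ₁] [Fintype μ₂] [DecidableEq ι₁] [DecidableEq ι₂]
    [DecidableEq κ₁] [DecidableEq κ₂]
    (f : ES κ₁ →L[ℂ] ES μ₁) (g : ES κ₂ →L[ℂ] ES μ₂)
    (f' : ES ι₁ →L[ℂ] ES κ₁) (g' : ES ι₂ →L[ℂ] ES κ₂) :
    tensorCLM (f.comp f') (g.comp g') = (tensorCLM f g).comp (tensorCLM f' g') := by
  unfold tensorCLM
  have hf : matOf (f.comp f') = matOf f * matOf f' := by
    rw [← aux_matOf_ofMat (matOf f * matOf f'), aux_ofMat_mul, aux_ofMat_matOf, aux_ofMat_matOf]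
  have hg : matOf (g.comp g') = matOf g * matOf g' := by
    rw [← aux_matOf_ofMat (matOf g * matOf g'), aux_ofMat_mul, aux_ofMat_matOf, aux_ofMat_matOf]
  rw [hf, hg, Matrix.mul_kronecker_mul, aux_ofMat_mul]

lemma aux_proj_apply {n r : ℕ} (i : Fin n) (y : ES (Fin n × Fin r)) (s : Fin r) :
    proj i y s = y (i, s) := by
  rw [proj, aux_ofMat_apply]
  rw [show ∑ j : Fin n × Fin r, (Matrix.of fun s (p : Fin n × Fin r) =>
      if p.1 = i ∧ p.2 = s then (1 : ℂ) else 0) s j * y j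
    = ∑ a : Fin n, ∑ b : Fin r, (if a = i ∧ b = s then (1:ℂ) else 0) * y (a, b) from
    Fintype.sum_prod_type _]
  simp [ite_and]

lemma aux_norm_proj_le {n r : ℕ} (i : Fin n) : ‖proj (n := n) (r := r) i‖ ≤ 1 := by
  apply ContinuousLinearMap.opNorm_le_bound _ zero_le_one
  intro y
  rw [one_mul]
  have key : ‖proj i y‖ ^ 2 ≤ ‖y‖ ^ 2 := by
    rw [aux_norm_sq_eq, aux_norm_sq_eq y, Fintype.sum_prod_type]
    have h1 : ∑ s : Fin r, ‖proj i y s‖ ^ 2 = ∑ s : Fin r, ‖y (i, s)‖ ^ 2 :=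
      Finset.sum_congr rfl fun s _ => by rw [aux_proj_apply]
    rw [h1]
    exact Finset.single_le_sum (f := fun a : Fin n => ∑ s : Fin r, ‖y (a, s)‖ ^ 2)
      (fun a _ => by positivity) (Finset.mem_univ i)
  have := Real.sqrt_le_sqrt key
  rwa [Real.sqrt_sq (norm_nonneg _), Real.sqrt_sq (norm_nonneg _)] at this

lemma aux_norm_embedAB_le {n k : ℕ} (i j : Fin n) : ‖embedAB (n := n) (k := k) i j‖ ≤ 1 := by
  apply ContinuousLinearMap.opNorm_le_bound _ zero_le_one
  intro x
  rw [one_mul]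
  have happ : ∀ p : Fin n × Fin n × Fin k,
      embedAB i j x p = if p.1 = i ∧ p.2.1 = j then x p.2.2 else 0 := by
    intro p
    rw [embedAB, aux_ofMat_apply]
    by_cases h1 : p.1 = i ∧ p.2.1 = j
    · simp [h1, ite_and]
    · rw [if_neg h1]
      apply Finset.sum_eq_zero
      intro c _
      rw [Matrix.of_apply, if_neg, zero_mul]
      tauto
  have key : ‖embedAB i j x‖ ^ 2 ≤ ‖x‖ ^ 2 := by
    rw [aux_norm_sq_eq, aux_norm_sq_eq x]
    have h2 : ∑ p : Fin n × Fin n × Fin k, ‖embedAB i j x p‖ ^ 2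
        = ∑ a : Fin n, ∑ b : Fin n, ∑ c : Fin k,
            ‖if a = i ∧ b = j then x c else 0‖ ^ 2 := by
      rw [show ∑ p : Fin n × Fin n × Fin k, ‖embedAB i j x p‖ ^ 2
          = ∑ a : Fin n, ∑ q : Fin n × Fin k, ‖embedAB i j x (a, q)‖ ^ 2 from
        Fintype.sum_prod_type _]
      refine Finset.sum_congr rfl fun a _ => ?_
      rw [show ∑ q : Fin n × Fin k, ‖embedAB i j x (a, q)‖ ^ 2
          = ∑ b : Fin n, ∑ c : Fin k, ‖embedAB i j x (a, b, c)‖ ^ 2 from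
        Fintype.sum_prod_type _]
      refine Finset.sum_congr rfl fun b _ => Finset.sum_congr rfl fun c _ => ?_
      rw [happ (a, b, c)]
    rw [h2]
    have h3 : ∀ a : Fin n, ∀ b : Fin n, ∑ c : Fin k, ‖if a = i ∧ b = j then x c else 0‖ ^ 2
        ≤ if a = i ∧ b = j then ∑ c : Fin k, ‖x c‖ ^ 2 else 0 := by
      intro a b
      by_cases h : a = i ∧ b = j <;> simp [h]
    calc ∑ a : Fin n, ∑ b : Fin n, ∑ c : Fin k, ‖if a = i ∧ b = j then x c else 0‖ ^ 2
        ≤ ∑ a : Fin n, ∑ b : Fin n, (if a = i ∧ b = j then ∑ c : Fin k, ‖x c‖ ^ 2 else 0) :=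
          Finset.sum_le_sum fun a _ => Finset.sum_le_sum fun b _ => h3 a b
      _ = ∑ c : Fin k, ‖x c‖ ^ 2 := by simp [ite_and]
  have := Real.sqrt_le_sqrt key
  rwa [Real.sqrt_sq (norm_nonneg _), Real.sqrt_sq (norm_nonneg _)] at this

lemma aux_norm_sgn (b : Bool) : ‖sgn b‖ = 1 := by cases b <;> simp [sgn]

lemma aux_sgn_not (b : Bool) : sgn (!b) = - sgn b := by cases b <;> simp [sgn]

/-- The basic building block of `PhiI`. -/
def Tmap {n k k' r : ℕ} (S : PureStrategy n k k' r) (η : (Fin n × Fin n) → Bool)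
    (pq : Fin n × Fin n) : ES (Fin k × Fin k') →L[ℂ] ES (Fin r × Fin r) :=
  (tensorCLM ((proj pq.1).comp (S.Vt η)) ((proj pq.2).comp (S.Wt η))).comp
    (tensorCLM (Vij S.V pq.1 pq.2) (ContinuousLinearMap.id ℂ (ES (Fin k'))))

lemma aux_norm_R_le {n k k' r : ℕ} (S : PureStrategy n k k' r) (pq : Fin n × Fin n) :
    ‖tensorCLM (Vij S.V pq.1 pq.2) (ContinuousLinearMap.id ℂ (ES (Fin k')))‖ ≤ 1 := by
  refine (aux_norm_tensorCLM_le _ _).trans ?_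
  have h1 : ‖Vij S.V pq.1 pq.2‖ ≤ 1 := by
    refine (ContinuousLinearMap.opNorm_comp_le _ _).trans ?_
    have := aux_norm_embedAB_le (n := n) (k := k) pq.1 pq.2
    nlinarith [norm_nonneg (embedAB (n := n) (k := k) pq.1 pq.2), S.hV, norm_nonneg S.V]
  have h2 : ‖ContinuousLinearMap.id ℂ (ES (Fin k'))‖ ≤ 1 := ContinuousLinearMap.norm_id_le
  nlinarith [norm_nonneg (Vij S.V pq.1 pq.2),
    norm_nonneg (ContinuousLinearMap.id ℂ (ES (Fin k')))]

lemma aux_norm_Tmap_le {n k k' r : ℕ} (S : PureStrategy n k k' r)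
    (η : (Fin n × Fin n) → Bool) (pq : Fin n × Fin n) : ‖Tmap S η pq‖ ≤ 1 := by
  refine (ContinuousLinearMap.opNorm_comp_le _ _).trans ?_
  have h1 : ‖(proj pq.1).comp (S.Vt η)‖ ≤ 1 := by
    refine (ContinuousLinearMap.opNorm_comp_le _ _).trans ?_
    have := aux_norm_proj_le (n := n) (r := r) pq.1
    nlinarith [norm_nonneg (proj (n := n) (r := r) pq.1), S.hVt η, norm_nonneg (S.Vt η)]
  have h2 : ‖(proj pq.2).comp (S.Wt η)‖ ≤ 1 := by
    refine (ContinuousLinearMap.opNorm_comp_le _ _).trans ?_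
    have := aux_norm_proj_le (n := n) (r := r) pq.2
    nlinarith [norm_nonneg (proj (n := n) (r := r) pq.2), S.hWt η, norm_nonneg (S.Wt η)]
  have h3 : ‖tensorCLM ((proj pq.1).comp (S.Vt η)) ((proj pq.2).comp (S.Wt η))‖ ≤ 1 := by
    refine (aux_norm_tensorCLM_le _ _).trans ?_
    nlinarith [norm_nonneg ((proj pq.1).comp (S.Vt η)), norm_nonneg ((proj pq.2).comp (S.Wt η))]
  have h4 := aux_norm_R_le S pq
  nlinarith [norm_nonneg (tensorCLM ((proj pq.1).comp (S.Vt η)) ((proj pq.2).comp (S.Wt η))),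
    norm_nonneg (tensorCLM (Vij S.V pq.1 pq.2) (ContinuousLinearMap.id ℂ (ES (Fin k'))))]

set_option maxHeartbeats 1000000 in
lemma aux_pointwise {n k k' r : ℕ} (hn : 2 ≤ n) (S : PureStrategy n k k' r)
    (ε : (Fin n × Fin n) → Bool) (ij : Fin n × Fin n) :
    ‖PhiI S ε - PhiI S (flipAt ε ij)‖
      ≤ ‖tensorCLM (S.Vt ε) (S.Wt ε)
          - tensorCLM (S.Vt (flipAt ε ij)) (S.Wt (flipAt ε ij))‖ + 2 / (n : ℝ) ^ 2 := by
  set ε' := flipAt ε ij with hε'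
  set D := tensorCLM (S.Vt ε) (S.Wt ε) - tensorCLM (S.Vt ε') (S.Wt ε') with hD
  have hn0 : (0 : ℝ) < (n : ℝ) := by positivity
  have hdiff : PhiI S ε - PhiI S ε' = ((n : ℂ) ^ 2)⁻¹ •
      ∑ pq : Fin n × Fin n, (sgn (ε pq) • Tmap S ε pq - sgn (ε' pq) • Tmap S ε' pq) := by
    calc PhiI S ε - PhiI S ε'
        = ((n : ℂ) ^ 2)⁻¹ • (∑ pq : Fin n × Fin n, sgn (ε pq) • Tmap S ε pq)
          - ((n : ℂ) ^ 2)⁻¹ • (∑ pq : Fin n × Fin n, sgn (ε' pq) • Tmap S ε' pq) := rfl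
      _ = ((n : ℂ) ^ 2)⁻¹ • ((∑ pq : Fin n × Fin n, sgn (ε pq) • Tmap S ε pq)
          - ∑ pq : Fin n × Fin n, sgn (ε' pq) • Tmap S ε' pq) := (smul_sub _ _ _).symm
      _ = ((n : ℂ) ^ 2)⁻¹ •
          ∑ pq : Fin n × Fin n, (sgn (ε pq) • Tmap S ε pq - sgn (ε' pq) • Tmap S ε' pq) :=
          by rw [Finset.sum_sub_distrib]
  have hterm : ∀ pq : Fin n × Fin n,
      ‖sgn (ε pq) • Tmap S ε pq - sgn (ε' pq) • Tmap S ε' pq‖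
        ≤ ‖D‖ + (if pq = ij then 2 else 0) := by
    intro pq
    by_cases hpq : pq = ij
    · subst hpq
      have hsgn : sgn (ε' pq) = - sgn (ε pq) := by
        rw [hε', flipAt, Function.update_self, aux_sgn_not]
      rw [hsgn, if_pos rfl, neg_smul (sgn (ε pq)) (Tmap S ε' pq), sub_neg_eq_add]
      have hle : ‖sgn (ε pq) • Tmap S ε pq + sgn (ε pq) • Tmap S ε' pq‖ ≤ 2 := by
        refine (norm_add_le _ _).trans ?_
        rw [norm_smul (sgn (ε pq)) (Tmap S ε pq), norm_smul (sgn (ε pq)) (Tmap S ε' pq),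
          aux_norm_sgn, one_mul, one_mul]
        linarith [aux_norm_Tmap_le S ε pq, aux_norm_Tmap_le S ε' pq]
      linarith [norm_nonneg D]
    · have hsgn : ε' pq = ε pq := by
        rw [hε', flipAt]
        exact Function.update_of_ne hpq _ _
      rw [hsgn, if_neg hpq, add_zero, ← smul_sub (sgn (ε pq)) (Tmap S ε pq) (Tmap S ε' pq),
        norm_smul (sgn (ε pq)) (Tmap S ε pq - Tmap S ε' pq), aux_norm_sgn, one_mul]
      have hfac : Tmap S ε pq - Tmap S ε' pq
          = ((tensorCLM (proj pq.1) (proj pq.2)).comp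
              (D.comp (tensorCLM (Vij S.V pq.1 pq.2)
                (ContinuousLinearMap.id ℂ (ES (Fin k')))))) := by
        rw [hD, ContinuousLinearMap.sub_comp, ContinuousLinearMap.comp_sub]
        unfold Tmap
        rw [aux_tensorCLM_comp, aux_tensorCLM_comp, ContinuousLinearMap.comp_assoc,
          ContinuousLinearMap.comp_assoc]
      rw [hfac]
      have hpp : ‖tensorCLM (proj (n := n) (r := r) pq.1) (proj (n := n) (r := r) pq.2)‖ ≤ 1 := by
        refine (aux_norm_tensorCLM_le _ _).trans ?_
        nlinarith [aux_norm_proj_le (n := n) (r := r) pq.1,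
          aux_norm_proj_le (n := n) (r := r) pq.2,
          norm_nonneg (proj (n := n) (r := r) pq.1), norm_nonneg (proj (n := n) (r := r) pq.2)]
      have hR := aux_norm_R_le S pq
      calc ‖(tensorCLM (proj pq.1) (proj pq.2)).comp
              (D.comp (tensorCLM (Vij S.V pq.1 pq.2)
                (ContinuousLinearMap.id ℂ (ES (Fin k')))))‖
          ≤ ‖tensorCLM (proj (n := n) (r := r) pq.1) (proj (n := n) (r := r) pq.2)‖ *
              ‖D.comp (tensorCLM (Vij S.V pq.1 pq.2)
                (ContinuousLinearMap.id ℂ (ES (Fin k'))))‖ :=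
            ContinuousLinearMap.opNorm_comp_le _ _
        _ ≤ ‖D‖ := by
            have h5 : ‖D.comp (tensorCLM (Vij S.V pq.1 pq.2)
                (ContinuousLinearMap.id ℂ (ES (Fin k'))))‖ ≤ ‖D‖ := by
              refine (ContinuousLinearMap.opNorm_comp_le _ _).trans ?_
              nlinarith [norm_nonneg D,
                norm_nonneg (tensorCLM (Vij S.V pq.1 pq.2)
                  (ContinuousLinearMap.id ℂ (ES (Fin k'))))]
            nlinarith [norm_nonneg (D.comp (tensorCLM (Vij S.V pq.1 pq.2)
              (ContinuousLinearMap.id ℂ (ES (Fin k'))))), norm_nonneg D]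
  calc ‖PhiI S ε - PhiI S ε'‖
      = ((n : ℝ) ^ 2)⁻¹ * ‖∑ pq : Fin n × Fin n,
          (sgn (ε pq) • Tmap S ε pq - sgn (ε' pq) • Tmap S ε' pq)‖ := by
        rw [hdiff, norm_smul (((n : ℂ) ^ 2)⁻¹) (∑ pq : Fin n × Fin n,
          (sgn (ε pq) • Tmap S ε pq - sgn (ε' pq) • Tmap S ε' pq)),
          norm_inv, norm_pow, Complex.norm_natCast]
    _ ≤ ((n : ℝ) ^ 2)⁻¹ * ∑ pq : Fin n × Fin n, (‖D‖ + (if pq = ij then 2 else 0)) := by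
        apply mul_le_mul_of_nonneg_left _ (by positivity)
        exact (norm_sum_le _ _).trans (Finset.sum_le_sum fun pq _ => hterm pq)
    _ = ((n : ℝ) ^ 2)⁻¹ * ((n : ℝ) ^ 2 * ‖D‖ + 2) := by
        rw [Finset.sum_add_distrib, Finset.sum_const, Finset.sum_ite_eq' Finset.univ ij
          (fun _ => (2 : ℝ)), if_pos (Finset.mem_univ ij), Finset.card_univ,
          Fintype.card_prod, Fintype.card_fin, nsmul_eq_mul]
        push_cast
        ring
    _ = ‖D‖ + 2 / (n : ℝ) ^ 2 := by
        field_simp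

end Aux

/-- there is a universal constant `C > 0` such that for every pure strategy
`S` for `G_Rad^{(n)}` and every sign matrix `ε`:
`(Σ_{ij} ‖∂_{ij}Φ^i_S(ε)‖_op²)^{1/2}
  ≤ (Σ_{ij} (1/4)·‖Ṽ_ε ⊗ W̃_ε − Ṽ_{ε̄^{ij}} ⊗ W̃_{ε̄^{ij}}‖_op²)^{1/2} + C/n`. -/
theorem statement14 :
    ∃ C : ℝ, 0 < C ∧
      ∀ (n k k' r : ℕ), 2 ≤ n → 1 ≤ k → 1 ≤ k' → 1 ≤ r →
        ∀ (S : PureStrategy n k k' r) (ε : (Fin n × Fin n) → Bool),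
          Real.sqrt (∑ ij : Fin n × Fin n,
              (‖PhiI S ε - PhiI S (flipAt ε ij)‖ / 2) ^ 2)
            ≤ Real.sqrt (∑ ij : Fin n × Fin n,
                (1 / 4 : ℝ) * ‖tensorCLM (S.Vt ε) (S.Wt ε)
                  - tensorCLM (S.Vt (flipAt ε ij)) (S.Wt (flipAt ε ij))‖ ^ 2)
              + C / n := by
  refine ⟨1, one_pos, fun n k k' r hn hk hk' hr S ε => ?_⟩
  have hn0 : (0 : ℝ) < (n : ℝ) := by positivity
  set D : Fin n × Fin n → ℝ := fun ij => ‖tensorCLM (S.Vt ε) (S.Wt ε)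
    - tensorCLM (S.Vt (flipAt ε ij)) (S.Wt (flipAt ε ij))‖ with hDdef
  have step1 : Real.sqrt (∑ ij : Fin n × Fin n, (‖PhiI S ε - PhiI S (flipAt ε ij)‖ / 2) ^ 2)
      ≤ Real.sqrt (∑ ij : Fin n × Fin n, (D ij / 2 + 1 / (n : ℝ) ^ 2) ^ 2) := by
    apply Real.sqrt_le_sqrt
    apply Finset.sum_le_sum
    intro ij _
    apply pow_le_pow_left₀ (by positivity)
    simp only [hDdef]
    have h := aux_pointwise hn S ε ij
    set X := ‖PhiI S ε - PhiI S (flipAt ε ij)‖ with hX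
    set Y := ‖tensorCLM (S.Vt ε) (S.Wt ε) - tensorCLM (S.Vt (flipAt ε ij)) (S.Wt (flipAt ε ij))‖ with hY
    have h4 : 2 / (n : ℝ) ^ 2 = 1 / (n : ℝ) ^ 2 + 1 / (n : ℝ) ^ 2 := by ring
    rw [h4] at h
    linarith
  refine step1.trans ?_
  have minkowski : Real.sqrt (∑ ij : Fin n × Fin n, (D ij / 2 + 1 / (n : ℝ) ^ 2) ^ 2)
      ≤ Real.sqrt (∑ ij : Fin n × Fin n, (D ij / 2) ^ 2)
        + Real.sqrt (∑ ij : Fin n × Fin n, (1 / (n : ℝ) ^ 2) ^ 2) := by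
    set u : EuclideanSpace ℝ (Fin n × Fin n) := WithLp.toLp 2 (fun ij => D ij / 2) with hu
    set v : EuclideanSpace ℝ (Fin n × Fin n) := WithLp.toLp 2 (fun ij => 1 / (n : ℝ) ^ 2) with hv
    have hnorm : ∀ w : EuclideanSpace ℝ (Fin n × Fin n),
        ‖w‖ = Real.sqrt (∑ ij : Fin n × Fin n, (w ij) ^ 2) := by
      intro w
      rw [EuclideanSpace.norm_eq]
      congr 1
      exact Finset.sum_congr rfl fun ij _ => by rw [Real.norm_eq_abs, sq_abs]
    have h1 : Real.sqrt (∑ ij : Fin n × Fin n, (D ij / 2 + 1 / (n : ℝ) ^ 2) ^ 2)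
        = ‖u + v‖ := by
      rw [hnorm (u + v)]
      congr 1
    have h2 := norm_add_le u v
    rw [h1, hnorm u, hnorm v] at *
    exact h2
  refine minkowski.trans ?_
  have heq1 : ∑ ij : Fin n × Fin n, (D ij / 2) ^ 2
      = ∑ ij : Fin n × Fin n, (1 / 4 : ℝ) * ‖tensorCLM (S.Vt ε) (S.Wt ε)
          - tensorCLM (S.Vt (flipAt ε ij)) (S.Wt (flipAt ε ij))‖ ^ 2 :=
    Finset.sum_congr rfl fun ij _ => by simp only [hDdef]; ring
  have heq2 : Real.sqrt (∑ ij : Fin n × Fin n, (1 / (n : ℝ) ^ 2) ^ 2) = 1 / n := by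
    rw [Finset.sum_const, Finset.card_univ]
    have hcard : (Fintype.card (Fin n × Fin n) : ℝ) = (n : ℝ) ^ 2 := by
      simp [Fintype.card_prod]
      ring
    rw [nsmul_eq_mul, hcard]
    rw [show (n : ℝ) ^ 2 * (1 / (n : ℝ) ^ 2) ^ 2 = (1 / n) ^ 2 by field_simp]
    exact Real.sqrt_sq (by positivity)
  rw [heq1, heq2]


end
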